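/- Let S be a finite set and let X₁, X₂, … be a partially exchangeable process with values in S. Then for every T ≥ 1, every a ∈ S, every x ∈ S^T in which a occurs at least twice, and every permutation σ of the a-blocks of x, P(X₁ = x₁, …, X_T = x_T) = P(X₁ = (σ·x)₁, …, X_T = (σ·x)_T). In particular this holds whenever the process is a mixture of Markov chains. -/

import Mathlib

open MeasureTheory

namespace BlockAux

variable {α : Type*}

lemma count_perm {β : Type*} [BEq β] {l₁ l₂ : List β} (h : List.Perm l₁ l₂) (b : β) :
    l₁.count b = l₂.count b := h.countP_eq _

lemma perm_flatten {l₁ l₂ : List (List α)} (h : List.Perm l₁ l₂) :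
    List.Perm l₁.flatten l₂.flatten := by
  induction h with
  | nil => rfl
  | cons x _ ih => simpa using ih.append_left x
  | swap x y l =>
      simp only [List.flatten_cons, ← List.append_assoc]
      exact (List.perm_append_comm).append_right _
  | trans _ _ ih₁ ih₂ => exact ih₁.trans ih₂

lemma zip_append (l m : List α) (c : α) (hm : m.head? = some c) :
    (l ++ m).zip (l ++ m).tail
      = ((l ++ [c]).zip (l ++ [c]).tail) ++ m.zip m.tail := by
  induction l with
  | nil => simp
  | cons a l ih =>
      cases m with
      | nil => simp at hm
      | cons b m' =>
          simp only [List.head?_cons, Option.some.injEq] at hm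
          subst hm
          cases l with
          | nil => simp
          | cons e l' =>
              simp only [List.cons_append, List.tail_cons, List.zip_cons_cons] at *
              rw [ih]

lemma head?_flatten_append (L : List (List α)) (s : List α) (a : α)
    (hL : ∀ b ∈ L, b.head? = some a) (hs : s.head? = some a) :
    (L.flatten ++ s).head? = some a := by
  induction L with
  | nil => simpa
  | cons b L ih =>
      cases b with
      | nil => exact absurd (hL [] (by simp)) (by simp)
      | cons c b' =>
          have := hL (c :: b') (by simp)
          simp only [List.head?_cons, Option.some.injEq] at this
          simp [this]

lemma zip_flatten (L : List (List α)) (s : List α) (a : α)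
    (hL : ∀ b ∈ L, b.head? = some a) (hs : s.head? = some a) :
    (L.flatten ++ s).zip (L.flatten ++ s).tail
      = (L.map (fun b => (b ++ [a]).zip (b ++ [a]).tail)).flatten
          ++ s.zip s.tail := by
  induction L with
  | nil => simp
  | cons b L ih =>
      have h1 : (L.flatten ++ s).head? = some a :=
        head?_flatten_append L s a (fun b hb => hL b (by simp [hb])) hs
      have := zip_append b (L.flatten ++ s) a h1
      simp only [List.flatten_cons, List.append_assoc]
      rw [this, ih (fun b hb => hL b (by simp [hb]))]
      simp [List.append_assoc]

end BlockAux

/-- The number of transitions from `i` to `j` in a finite sequence (list) `x`: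
`n_{ij}(x) = Σ_{t=1}^{T-1} 1[x_t = i, x_{t+1} = j]`. -/
def transCountL {S : Type*} [DecidableEq S] (x : List S) (i j : S) : ℕ :=
  (x.zip x.tail).count (i, j)

/-- The cylinder event on which the first `x.length` values of the process `X` coincide
with the finite sequence `x`. -/
def cylinder {Ω S : Type*} (X : ℕ → Ω → S) (x : List S) : Set Ω :=
  {ω | (List.ofFn fun k : Fin x.length => X k.val ω) = x}

/-- The process `X` (under the probability measure `P`) is partially exchangeable: any two
finite sequences of the same length `T ≥ 1` with the same starting state and the same
transition counts have the same probability. -/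
def IsPartiallyExchangeableL {Ω : Type*} [MeasurableSpace Ω] (P : Measure Ω)
    {S : Type*} [DecidableEq S] (X : ℕ → Ω → S) : Prop :=
  ∀ x x' : List S, x ≠ [] → x.length = x'.length → x.head? = x'.head? →
    (∀ i j : S, transCountL x i j = transCountL x' i j) →
    P (cylinder X x) = P (cylinder X x')

/-- For a partially exchangeable process, the probability of a finite sequence is invariant
under permutations of its `a`-blocks.  Here `x = p ++ B₁ ++ ⋯ ++ B_{d-1} ++ s`, where `a`
occurs `d ≥ 2` times in `x`: the prefix `p` has no `a`, each block `B_k` starts with `a` and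
contains no further `a`, the suffix `s` starts with `a` and contains no further `a`, and the
block-permuted sequence is `σ·x = p ++ B_{σ(1)} ++ ⋯ ++ B_{σ(d-1)} ++ s`. -/
theorem partiallyExchangeable_blockPermute_invariant
    {Ω : Type*} [MeasurableSpace Ω] (P : Measure Ω) [IsProbabilityMeasure P]
    {S : Type*} [Fintype S] [DecidableEq S] (X : ℕ → Ω → S)
    (hPE : IsPartiallyExchangeableL P X)
    (a : S) (d : ℕ) (hd : 2 ≤ d)
    (p s : List S) (B : Fin (d - 1) → List S)
    (hp : a ∉ p)
    (hs₁ : s ≠ []) (hs₂ : s.head? = some a) (hs₃ : a ∉ s.tail)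
    (hB₁ : ∀ k, B k ≠ []) (hB₂ : ∀ k, (B k).head? = some a) (hB₃ : ∀ k, a ∉ (B k).tail)
    (x : List S) (hx : x = p ++ (List.ofFn B).flatten ++ s)
    (σ : Equiv.Perm (Fin (d - 1))) :
    P (cylinder X x) = P (cylinder X (p ++ (List.ofFn (B ∘ σ)).flatten ++ s)) := by
  subst hx
  set L : List (List S) := List.ofFn B with hL
  set L' : List (List S) := List.ofFn (B ∘ σ) with hL'
  have hLmem : ∀ b ∈ L, b.head? = some a := by
    intro b hb
    obtain ⟨k, rfl⟩ := List.mem_ofFn.1 hb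
    exact hB₂ k
  have hL'mem : ∀ b ∈ L', b.head? = some a := by
    intro b hb
    obtain ⟨k, rfl⟩ := List.mem_ofFn.1 hb
    exact hB₂ (σ k)
  have hpermL : List.Perm L' L := σ.ofFn_comp_perm B
  have hpermflat : List.Perm L'.flatten L.flatten := BlockAux.perm_flatten hpermL
  -- head of the block part
  have hhead : (L.flatten ++ s).head? = some a :=
    BlockAux.head?_flatten_append L s a hLmem hs₂
  have hhead' : (L'.flatten ++ s).head? = some a :=
    BlockAux.head?_flatten_append L' s a hL'mem hs₂
  apply hPE
  · simp [hs₁]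
  · simp [hpermflat.length_eq]
  · cases p with
    | nil => simpa using hhead.trans hhead'.symm
    | cons c p' => simp
  · -- transition counts
    intro i j
    unfold transCountL
    have e1 := BlockAux.zip_append p (L.flatten ++ s) a hhead
    have e2 := BlockAux.zip_append p (L'.flatten ++ s) a hhead'
    have f1 := BlockAux.zip_flatten L s a hLmem hs₂
    have f2 := BlockAux.zip_flatten L' s a hL'mem hs₂
    rw [← List.append_assoc] at e1 e2
    rw [e1, e2, f1, f2]
    have hpermmap : List.Perm
        (L'.map (fun b => (b ++ [a]).zip (b ++ [a]).tail)).flatten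
        (L.map (fun b => (b ++ [a]).zip (b ++ [a]).tail)).flatten :=
      BlockAux.perm_flatten (hpermL.map _)
    exact (BlockAux.count_perm ((hpermmap.append_right _).append_left _) _).symm
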